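/- For all integers a, b ≥ 2 and r ≥ 0, the network consisting of a complete bipartite graph K_{a,b} together with r isolated vertices is an APSN for the betweenness centrality game. In particular, a 4-cycle together with any number of isolated vertices is an APSN, and there exist APSN for the betweenness centrality game whose connected component with at least two vertices is not a complete graph. -/

import Mathlib

open SimpleGraph

/-- Degree of vertex `i` in network `g`. -/
noncomputable def deg {V : Type*} (g : SimpleGraph V) (i : V) : ℕ :=
  Nat.card (g.neighborSet i)

/-- The network `g` with the (missing) edge `ij` added. -/
def addE {V : Type*} (g : SimpleGraph V) (i j : V) : SimpleGraph V :=
  g ⊔ SimpleGraph.fromEdgeSet {s(i, j)}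

/-- The network `g` with the edge `ij` removed. -/
def delE {V : Type*} (g : SimpleGraph V) (i j : V) : SimpleGraph V :=
  g.deleteEdges {s(i, j)}

/-- Utility of agent `i` in the game with centralities `C` and edge cost `c`. -/
noncomputable def util {V : Type*} (C : V → SimpleGraph V → ℝ) (c : ℝ) (i : V)
    (g : SimpleGraph V) : ℝ :=
  C i g - c * (deg g i)

/-- Adding the missing edge `ij` is an improving move. -/
def ImprovingAdd {V : Type*} (C : V → SimpleGraph V → ℝ) (c : ℝ) (g : SimpleGraph V)
    (i j : V) : Prop :=
  util C c i (addE g i j) ≥ util C c i g ∧ util C c j (addE g i j) ≥ util C c j g ∧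
    (util C c i (addE g i j) > util C c i g ∨ util C c j (addE g i j) > util C c j g)

/-- Deleting the edge `ij` is an improving move. -/
def ImprovingDel {V : Type*} (C : V → SimpleGraph V → ℝ) (c : ℝ) (g : SimpleGraph V)
    (i j : V) : Prop :=
  util C c i (delE g i j) > util C c i g ∨ util C c j (delE g i j) > util C c j g

/-- `g` is pairwise stable at edge cost `c`. -/
def PairwiseStable {V : Type*} (C : V → SimpleGraph V → ℝ) (c : ℝ) (g : SimpleGraph V) : Prop :=
  (∀ i j : V, i ≠ j → ¬ g.Adj i j → ¬ ImprovingAdd C c g i j) ∧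
  (∀ i j : V, g.Adj i j → ¬ ImprovingDel C c g i j)

/-- `g` is asymptotically pairwise stable. -/
def APSN {V : Type*} (C : V → SimpleGraph V → ℝ) (g : SimpleGraph V) : Prop :=
  ∃ ε₀ : ℝ, 0 < ε₀ ∧ ∀ c : ℝ, 0 < c → c < ε₀ → PairwiseStable C c g

/-- Axiom 1: the centrality of agent `i` is increasing. -/
def Axiom1 {V : Type*} (C : V → SimpleGraph V → ℝ) (i : V) : Prop :=
  ∀ (g : SimpleGraph V) (j : V), j ≠ i → ¬ g.Adj i j → C i (addE g i j) > C i g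

/-- Axiom 1′: the centrality of agent `i` is decreasing. -/
def Axiom1' {V : Type*} (C : V → SimpleGraph V → ℝ) (i : V) : Prop :=
  ∀ (g : SimpleGraph V) (j : V), j ≠ i → ¬ g.Adj i j → C i (addE g i j) < C i g

/-- Axiom 2: the centrality of agent `i` is componentwise. -/
def Axiom2 {V : Type*} (C : V → SimpleGraph V → ℝ) (i : V) : Prop :=
  ∀ (g : SimpleGraph V) (j : V), j ≠ i → ¬ g.Adj i j →
    ((g.Reachable i j → C i (addE g i j) > C i g) ∧
     (¬ g.Reachable i j → C i (addE g i j) ≤ C i g))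

/-- Axiom 2′: the centrality of agent `i` is peripheral. -/
def Axiom2' {V : Type*} (C : V → SimpleGraph V → ℝ) (i : V) : Prop :=
  ∀ (g : SimpleGraph V) (j : V), j ≠ i → ¬ g.Adj i j →
    ((g.Reachable i j → C i (addE g i j) ≤ C i g) ∧
     (¬ g.Reachable i j → C i (addE g i j) > C i g))

/-- The centrality of agent `i` is degree homophilic with (strictly increasing) `f`. -/
def DegreeHomophilic {V : Type*} (C : V → SimpleGraph V → ℝ) (i : V) (f : ℕ → ℤ) : Prop :=
  ∀ (g : SimpleGraph V) (j : V), j ≠ i → ¬ g.Adj i j →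
    (C i (addE g i j) > C i g ↔ (deg g j : ℤ) ≤ f (deg g i))

/-- The number of shortest paths between `y` and `z` in `g`
(`0` if `y` and `z` are in different components). -/
noncomputable def sigmaAll {V : Type*} (g : SimpleGraph V) (y z : V) : ℕ :=
  Nat.card {p : g.Path y z // p.1.length = g.dist y z}

/-- The number of shortest paths between `y` and `z` in `g` passing through `i`. -/
noncomputable def sigmaThr {V : Type*} (g : SimpleGraph V) (y z i : V) : ℕ :=
  Nat.card {p : g.Path y z // p.1.length = g.dist y z ∧ i ∈ p.1.support}

open scoped Classical in
/-- Betweenness centrality of `i` in `g`: the sum over unordered pairs `{y,z} ⊆ V∖{i}`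
of `σ_yz(i)/σ_yz(g)` (summands with `σ_yz(g) = 0` vanish, since `x/0 = 0` in `ℝ`). -/
noncomputable def btw {V : Type*} [Fintype V] (g : SimpleGraph V) (i : V) : ℝ :=
  (1 / 2) * ∑ y : V, ∑ z : V,
    if y ≠ z ∧ y ≠ i ∧ z ≠ i then (sigmaThr g y z i : ℝ) / (sigmaAll g y z : ℝ) else 0

section Generic
set_option linter.unusedSectionVars false
variable {V : Type*} [DecidableEq V] {h : SimpleGraph V} {y z i j u v : V} {g : SimpleGraph V}

lemma addE_adj : (addE g i j).Adj u v ↔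
    g.Adj u v ∨ (u ≠ v ∧ (u = i ∧ v = j ∨ u = j ∧ v = i)) := by
  simp [addE, Sym2.eq_iff, and_comm]

lemma delE_adj : (delE g i j).Adj u v ↔
    g.Adj u v ∧ ¬(u = i ∧ v = j ∨ u = j ∧ v = i) := by
  simp [delE, Sym2.eq_iff]

lemma addE_comm : addE g i j = addE g j i := by
  ext u v; rw [addE_adj, addE_adj]; tauto

lemma delE_comm : delE g i j = delE g j i := by
  ext u v; rw [delE_adj, delE_adj]; tauto

lemma walk_length_two (p : h.Walk y z) (hl : p.length = 2) :
    ∃ (x : V) (h1 : h.Adj y x) (h2 : h.Adj x z), p = Walk.cons h1 (Walk.cons h2 Walk.nil) := by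
  cases p with
  | nil => simp at hl
  | cons h1 q =>
    cases q with
    | nil => simp at hl
    | cons h2 q' =>
      cases q' with
      | nil => exact ⟨_, h1, h2, rfl⟩
      | cons h3 q'' => simp [Walk.length_cons] at hl

lemma support_length_one (p : h.Walk y z) (hl : p.length = 1) : p.support = [y, z] := by
  cases p with
  | nil => simp at hl
  | cons h1 q =>
    cases q with
    | nil => simp
    | cons h2 q' => simp [Walk.length_cons] at hl

lemma dist_eq_two (hne : y ≠ z) (hnadj : ¬ h.Adj y z) {x : V}
    (h1 : h.Adj y x) (h2 : h.Adj x z) : h.dist y z = 2 := by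
  have hw : h.dist y z ≤ 2 := by
    have := SimpleGraph.dist_le (Walk.cons h1 (Walk.cons h2 Walk.nil))
    simpa using this
  have hpos : 0 < h.dist y z :=
    Reachable.pos_dist_of_ne (Walk.cons h1 (Walk.cons h2 Walk.nil)).reachable hne
  have hone : h.dist y z ≠ 1 := fun hc => hnadj (dist_eq_one_iff_adj.mp hc)
  omega

noncomputable def len2Equiv (hyz : y ≠ z) :
    {p : h.Path y z // p.1.length = 2} ≃ {x : V // h.Adj y x ∧ h.Adj x z} where
  toFun p := ⟨p.1.1.getVert 1, by
    obtain ⟨x, h1, h2, hp⟩ := walk_length_two p.1.1 p.2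
    rw [hp]; exact ⟨by simpa using h1, by simpa using h2⟩⟩
  invFun x := ⟨⟨Walk.cons x.2.1 (Walk.cons x.2.2 Walk.nil), by
    rw [Walk.isPath_def]
    simp [hyz, x.2.1.ne, x.2.2.ne]⟩, by simp⟩
  left_inv p := by
    obtain ⟨x, h1, h2, hp⟩ := walk_length_two p.1.1 p.2
    have hx : p.1.1.getVert 1 = x := by rw [hp]; rfl
    apply Subtype.ext; apply Subtype.ext
    subst hx
    exact hp.symm
  right_inv x := by apply Subtype.ext; rfl

end Generic

section Sigma
open scoped Classical
set_option linter.unusedSectionVars false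
variable {V : Type*} [DecidableEq V] {h : SimpleGraph V} {y z i : V}

lemma sigmaAll_dist2 (hd : h.dist y z = 2) :
    sigmaAll h y z = Nat.card {x : V // h.Adj y x ∧ h.Adj x z} := by
  have hyz : y ≠ z := by rintro rfl; rw [SimpleGraph.dist_self] at hd; omega
  unfold sigmaAll
  rw [hd]
  exact Nat.card_congr (len2Equiv hyz)

lemma sigmaThr_dist2 (hd : h.dist y z = 2) (hiy : i ≠ y) (hiz : i ≠ z) :
    sigmaThr h y z i = if h.Adj y i ∧ h.Adj i z then 1 else 0 := by
  unfold sigmaThr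
  rw [hd]
  split_ifs with hc
  · rw [Nat.card_eq_one_iff_unique]
    constructor
    · constructor
      intro p q
      obtain ⟨x, h1, h2, hp⟩ := walk_length_two p.1.1 p.2.1
      obtain ⟨x', h1', h2', hq⟩ := walk_length_two q.1.1 q.2.1
      have hxi : x = i := by
        have := p.2.2
        rw [hp] at this
        simp at this
        rcases this with h' | h' | h' <;> [exact absurd h' hiy; exact h'.symm;
          exact absurd h' hiz]
      have hxi' : x' = i := by
        have := q.2.2
        rw [hq] at this
        simp at this
        rcases this with h' | h' | h' <;> [exact absurd h' hiy; exact h'.symm;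
          exact absurd h' hiz]
      subst hxi; subst hxi'
      apply Subtype.ext; apply Subtype.ext
      rw [hp, hq]
    · refine ⟨⟨⟨Walk.cons hc.1 (Walk.cons hc.2 Walk.nil), ?_⟩, by simp, by simp⟩⟩
      rw [Walk.isPath_def]
      have hyz : y ≠ z := by rintro rfl; rw [SimpleGraph.dist_self] at hd; omega
      simp [hyz, hc.1.ne, hc.2.ne]
  · have : IsEmpty {p : h.Path y z // p.1.length = 2 ∧ i ∈ p.1.support} := by
      constructor
      intro p
      obtain ⟨x, h1, h2, hp⟩ := walk_length_two p.1.1 p.2.1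
      have hxi : x = i := by
        have := p.2.2
        rw [hp] at this
        simp at this
        rcases this with h' | h' | h' <;> [exact absurd h' hiy; exact h'.symm;
          exact absurd h' hiz]
      subst hxi
      exact hc ⟨h1, h2⟩
    exact Nat.card_of_isEmpty

lemma sigmaThr_adj (hadj : h.Adj y z) (hiy : i ≠ y) (hiz : i ≠ z) :
    sigmaThr h y z i = 0 := by
  have hd : h.dist y z = 1 := dist_eq_one_iff_adj.mpr hadj
  unfold sigmaThr
  rw [hd]
  have : IsEmpty {p : h.Path y z // p.1.length = 1 ∧ i ∈ p.1.support} := by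
    constructor
    intro p
    have := p.2.2
    rw [support_length_one p.1.1 p.2.1] at this
    simp at this
    rcases this with h' | h' <;> [exact hiy h'; exact hiz h']
  exact Nat.card_of_isEmpty

lemma sigmaThr_not_reachable (hr : ¬ h.Reachable y z) : sigmaThr h y z i = 0 := by
  unfold sigmaThr
  have : IsEmpty {p : h.Path y z // p.1.length = h.dist y z ∧ i ∈ p.1.support} := by
    constructor
    intro p
    exact hr p.1.1.reachable
  exact Nat.card_of_isEmpty

lemma not_reachable_no_nbrs (hnb : ∀ w, ¬ h.Adj y w) (hyz : y ≠ z) : ¬ h.Reachable y z := by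
  intro hr
  obtain ⟨p⟩ := hr
  obtain ⟨w, hw, p', -⟩ := Walk.exists_eq_cons_of_ne hyz p
  exact hnb w hw

lemma sigmaThr_unique_nbr (hy : i ≠ y) (hz : i ≠ z)
    (hnb : ∀ u w, h.Adj i u → h.Adj i w → u = w) : sigmaThr h y z i = 0 := by
  unfold sigmaThr
  have : IsEmpty {p : h.Path y z // p.1.length = h.dist y z ∧ i ∈ p.1.support} := by
    constructor
    intro p
    have hi : i ∈ p.1.1.support := p.2.2
    set q := p.1.1.takeUntil i hi with hqdef
    set r := p.1.1.dropUntil i hi with hrdef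
    have hspec : q.append r = p.1.1 := Walk.take_spec p.1.1 hi
    -- last edge of q gives a neighbor u of i inside q.support
    obtain ⟨u, hu, q', hq'⟩ := Walk.exists_eq_cons_of_ne hy q.reverse
    have huq : u ∈ q.support := by
      have : u ∈ q.reverse.support := by rw [hq']; simp
      rwa [Walk.support_reverse, List.mem_reverse] at this
    -- first edge of r gives a neighbor w of i in r.support.tail
    obtain ⟨w, hw, r', hr'⟩ := Walk.exists_eq_cons_of_ne hz r
    have hwr : w ∈ r.support.tail := by
      rw [hr']
      simp
    have huw : u = w := hnb u w hu hw
    have hnodup : (q.support ++ r.support.tail).Nodup := by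
      rw [← Walk.support_append, hspec]
      exact p.1.2.support_nodup
    rw [List.nodup_append] at hnodup
    exact hnodup.2.2 u huq w hwr huw
  exact Nat.card_of_isEmpty

end Sigma

section BtwAux
open scoped Classical
set_option linter.unusedSectionVars false
variable {V : Type*} [Fintype V] [DecidableEq V] {g₁ g₂ : SimpleGraph V} {i : V}

lemma btw_eq_btw
    (h : ∀ y z : V, y ≠ z → y ≠ i → z ≠ i →
      (sigmaThr g₁ y z i : ℝ) / (sigmaAll g₁ y z : ℝ) =
      (sigmaThr g₂ y z i : ℝ) / (sigmaAll g₂ y z : ℝ)) : _root_.btw g₁ i = _root_.btw g₂ i := by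
  unfold _root_.btw
  congr 1
  apply Finset.sum_congr rfl
  intro y _
  apply Finset.sum_congr rfl
  intro z _
  split_ifs with hc
  · exact h y z hc.1 hc.2.1 hc.2.2
  · rfl

lemma btw_lt_btw
    (hle : ∀ y z : V, y ≠ z → y ≠ i → z ≠ i →
      (sigmaThr g₁ y z i : ℝ) / (sigmaAll g₁ y z : ℝ) ≤
      (sigmaThr g₂ y z i : ℝ) / (sigmaAll g₂ y z : ℝ))
    {y₀ z₀ : V} (hy₀ : y₀ ≠ z₀) (hy₀i : y₀ ≠ i) (hz₀i : z₀ ≠ i)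
    (hstrict : (sigmaThr g₁ y₀ z₀ i : ℝ) / (sigmaAll g₁ y₀ z₀ : ℝ) <
      (sigmaThr g₂ y₀ z₀ i : ℝ) / (sigmaAll g₂ y₀ z₀ : ℝ)) : _root_.btw g₁ i < _root_.btw g₂ i := by
  unfold _root_.btw
  refine mul_lt_mul_of_pos_left ?_ (by norm_num)
  apply Finset.sum_lt_sum
  · intro y _
    apply Finset.sum_le_sum
    intro z _
    split_ifs with hc
    · exact hle y z hc.1 hc.2.1 hc.2.2
    · exact le_refl 0
  · refine ⟨y₀, Finset.mem_univ _, ?_⟩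
    apply Finset.sum_lt_sum
    · intro z _
      split_ifs with hc
      · exact hle y₀ z hc.1 hc.2.1 hc.2.2
      · exact le_refl 0
    · refine ⟨z₀, Finset.mem_univ _, ?_⟩
      rw [if_pos ⟨hy₀, hy₀i, hz₀i⟩, if_pos ⟨hy₀, hy₀i, hz₀i⟩]
      exact hstrict

end BtwAux

section DegAux
set_option linter.unusedSectionVars false
variable {V : Type*} [Fintype V] [DecidableEq V] {g : SimpleGraph V} {i j : V}

lemma deg_addE (hne : i ≠ j) (hnadj : ¬ g.Adj i j) : deg (addE g i j) i = deg g i + 1 := by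
  have hset : (addE g i j).neighborSet i = insert j (g.neighborSet i) := by
    ext w
    constructor
    · intro hw
      rcases addE_adj.mp hw with hh | ⟨h1, ⟨-, h3⟩ | ⟨h2, -⟩⟩
      · exact Or.inr hh
      · exact Or.inl h3
      · exact absurd h2 hne
    · intro hw
      rcases hw with rfl | hh
      · exact addE_adj.mpr (Or.inr ⟨hne, Or.inl ⟨rfl, rfl⟩⟩)
      · exact addE_adj.mpr (Or.inl hh)
  unfold deg
  rw [hset, Nat.card_coe_set_eq, Nat.card_coe_set_eq,
    Set.ncard_insert_of_notMem (by simpa using hnadj)]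

lemma deg_delE (hadj : g.Adj i j) : deg (delE g i j) i = deg g i - 1 ∧ 1 ≤ deg g i := by
  have hne : i ≠ j := hadj.ne
  have hset : (delE g i j).neighborSet i = g.neighborSet i \ {j} := by
    ext w
    constructor
    · intro hw
      obtain ⟨h1, h2⟩ := delE_adj.mp hw
      exact ⟨h1, fun hwj => h2 (Or.inl ⟨rfl, hwj⟩)⟩
    · rintro ⟨h1, h2⟩
      refine delE_adj.mpr ⟨h1, ?_⟩
      rintro (⟨-, h4⟩ | ⟨h3, -⟩)
      · exact h2 h4
      · exact hne h3
  constructor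
  · unfold deg
    rw [hset, Nat.card_coe_set_eq, Nat.card_coe_set_eq,
      Set.ncard_diff_singleton_of_mem (by simpa using hadj)]
  · unfold deg
    rw [Nat.card_coe_set_eq]
    have : j ∈ g.neighborSet i := hadj
    have := (Set.ncard_pos (Set.toFinite _)).mpr ⟨j, this⟩
    omega

end DegAux

section Kab
set_option linter.unusedSectionVars false
variable {V : Type*} [Fintype V] [DecidableEq V] {A B : Finset V} {g : SimpleGraph V}

lemma btw_add_intra (hAB : Disjoint A B)
    (hg : ∀ u v : V, g.Adj u v ↔ ((u ∈ A ∧ v ∈ B) ∨ (u ∈ B ∧ v ∈ A)))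
    (hB : B.Nonempty) {i j : V} (hi : i ∈ A) (hj : j ∈ A) (hij : i ≠ j) :
    _root_.btw (addE g i j) i = _root_.btw g i := by
  have hmemA : ∀ {u}, u ∈ A → u ∉ B := fun hu => Finset.disjoint_left.mp hAB hu
  have hmemB : ∀ {u}, u ∈ B → u ∉ A := fun hu => Finset.disjoint_right.mp hAB hu
  have hgAB : ∀ {u v}, u ∈ A → v ∈ B → g.Adj u v := fun hu hv => (hg _ _).mpr (Or.inl ⟨hu, hv⟩)
  have hgBA : ∀ {u v}, u ∈ B → v ∈ A → g.Adj u v := fun hu hv => (hg _ _).mpr (Or.inr ⟨hu, hv⟩)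
  have hnAA : ∀ {u v}, u ∈ A → v ∈ A → ¬ g.Adj u v := by
    intro u v hu hv hadj
    rcases (hg _ _).mp hadj with ⟨h1, h2⟩ | ⟨h1, h2⟩
    · exact hmemA hv h2
    · exact hmemA hu h1
  have hnBB : ∀ {u v}, u ∈ B → v ∈ B → ¬ g.Adj u v := by
    intro u v hu hv hadj
    rcases (hg _ _).mp hadj with ⟨h1, h2⟩ | ⟨h1, h2⟩
    · exact hmemB hu h1
    · exact hmemB hv h2
  have hniso : ∀ {u v}, u ∉ A → u ∉ B → ¬ g.Adj u v := by
    intro u v h1 h2 hadj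
    rcases (hg _ _).mp hadj with ⟨h3, -⟩ | ⟨h3, -⟩
    · exact h1 h3
    · exact h2 h3
  have hadj' : ∀ v w : V, (v = i → w ≠ j) → (v = j → w ≠ i) →
      ((addE g i j).Adj v w ↔ g.Adj v w) := by
    intro v w h1 h2
    rw [addE_adj]
    constructor
    · rintro (h | ⟨hne, ⟨rfl, rfl⟩ | ⟨rfl, rfl⟩⟩)
      · exact h
      · exact absurd rfl (h1 rfl)
      · exact absurd rfl (h2 rfl)
    · exact Or.inl
  apply btw_eq_btw
  intro y z hyz hyi hzi
  by_cases hyA : y ∈ A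
  · by_cases hzA : z ∈ A
    · -- both in A : all sigmaThr vanish
      have hyj : y = j → z ≠ i := fun _ => hzi
      have hna : ¬ g.Adj y z := hnAA hyA hzA
      have hna' : ¬ (addE g i j).Adj y z := by
        rw [hadj' y z (fun h => absurd h hyi) hyj]; exact hna
      obtain ⟨x₀, hx₀⟩ := hB
      have hd : g.dist y z = 2 := dist_eq_two hyz hna (hgAB hyA hx₀) (hgBA hx₀ hzA)
      have hd' : (addE g i j).dist y z = 2 := by
        refine dist_eq_two hyz hna' (x := x₀) ?_ ?_
        · exact addE_adj.mpr (Or.inl (hgAB hyA hx₀))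
        · exact addE_adj.mpr (Or.inl (hgBA hx₀ hzA))
      rw [sigmaThr_dist2 hd (Ne.symm hyi) (Ne.symm hzi),
        sigmaThr_dist2 hd' (Ne.symm hyi) (Ne.symm hzi)]
      have hc1 : ¬ (g.Adj y i ∧ g.Adj i z) := fun hc => hnAA hyA hi hc.1
      have hc2 : ¬ ((addE g i j).Adj y i ∧ (addE g i j).Adj i z) := by
        rintro ⟨ha1, ha2⟩
        rcases addE_adj.mp ha2 with h | ⟨-, ⟨-, rfl⟩ | ⟨hii, -⟩⟩
        · exact hnAA hi hzA h
        · -- z = j, so Adj y i with y ≠ j impossible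
          rcases addE_adj.mp ha1 with h | ⟨-, ⟨rfl, -⟩ | ⟨rfl, -⟩⟩
          · exact hnAA hyA hi h
          · exact hyi rfl
          · exact hyz rfl
        · exact hij hii
      rw [if_neg hc1, if_neg hc2]
      simp
    · by_cases hzB : z ∈ B
      · -- y ∈ A, z ∈ B : adjacent in both
        have h1 : g.Adj y z := hgAB hyA hzB
        have h1' : (addE g i j).Adj y z := addE_adj.mpr (Or.inl h1)
        rw [sigmaThr_adj h1 (Ne.symm hyi) (Ne.symm hzi),
          sigmaThr_adj h1' (Ne.symm hyi) (Ne.symm hzi)]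
        simp
      · -- z isolated
        have h1 : ∀ w, ¬ g.Adj z w := fun w => hniso hzA hzB
        have h1' : ∀ w, ¬ (addE g i j).Adj z w := by
          intro w hw
          rcases addE_adj.mp hw with h | ⟨-, ⟨rfl, -⟩ | ⟨rfl, -⟩⟩
          · exact h1 w h
          · exact hzA hi
          · exact hzA hj
        have hr : ¬ g.Reachable y z := fun hr =>
          not_reachable_no_nbrs h1 (Ne.symm hyz) hr.symm
        have hr' : ¬ (addE g i j).Reachable y z := fun hr =>
          not_reachable_no_nbrs h1' (Ne.symm hyz) hr.symm
        rw [sigmaThr_not_reachable hr, sigmaThr_not_reachable hr']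
        simp
  · by_cases hyB : y ∈ B
    · by_cases hzA : z ∈ A
      · -- y ∈ B, z ∈ A : adjacent in both
        have h1 : g.Adj y z := hgBA hyB hzA
        have h1' : (addE g i j).Adj y z := addE_adj.mpr (Or.inl h1)
        rw [sigmaThr_adj h1 (Ne.symm hyi) (Ne.symm hzi),
          sigmaThr_adj h1' (Ne.symm hyi) (Ne.symm hzi)]
        simp
      · by_cases hzB : z ∈ B
        · -- y, z ∈ B : everything matches
          have hyij : y = i → False := fun h => hmemB hyB (h ▸ hi)
          have hyj : y = j → False := fun h => hmemB hyB (h ▸ hj)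
          have hzij : z = i → False := fun h => hmemB hzB (h ▸ hi)
          have hzj : z = j → False := fun h => hmemB hzB (h ▸ hj)
          have hna : ¬ g.Adj y z := hnBB hyB hzB
          have hna' : ¬ (addE g i j).Adj y z := by
            rw [hadj' y z (fun h => absurd h hyij) (fun h => absurd h hyj)]; exact hna
          have hd : g.dist y z = 2 := dist_eq_two hyz hna (hgBA hyB hi) (hgAB hi hzB)
          have hd' : (addE g i j).dist y z = 2 := by
            refine dist_eq_two hyz hna' (x := i) ?_ ?_
            · exact addE_adj.mpr (Or.inl (hgBA hyB hi))
            · exact addE_adj.mpr (Or.inl (hgAB hi hzB))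
          rw [sigmaThr_dist2 hd (Ne.symm hyi) (Ne.symm hzi),
            sigmaThr_dist2 hd' (Ne.symm hyi) (Ne.symm hzi),
            sigmaAll_dist2 hd, sigmaAll_dist2 hd']
          have hcard : Nat.card {x : V // (addE g i j).Adj y x ∧ (addE g i j).Adj x z} =
              Nat.card {x : V // g.Adj y x ∧ g.Adj x z} := by
            apply Nat.card_congr
            apply Equiv.subtypeEquivRight
            intro x
            rw [hadj' y x (fun h => absurd h hyij) (fun h => absurd h hyj),
              hadj' x z (fun _ => fun h => hzj h) (fun _ => fun h => hzij h)]
          rw [hcard, if_pos ⟨addE_adj.mpr (Or.inl (hgBA hyB hi)),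
            addE_adj.mpr (Or.inl (hgAB hi hzB))⟩, if_pos ⟨hgBA hyB hi, hgAB hi hzB⟩]
        · -- z isolated
          have h1 : ∀ w, ¬ g.Adj z w := fun w => hniso hzA hzB
          have h1' : ∀ w, ¬ (addE g i j).Adj z w := by
            intro w hw
            rcases addE_adj.mp hw with h | ⟨-, ⟨rfl, -⟩ | ⟨rfl, -⟩⟩
            · exact h1 w h
            · exact hzA hi
            · exact hzA hj
          have hr : ¬ g.Reachable y z := fun hr =>
            not_reachable_no_nbrs h1 (Ne.symm hyz) hr.symm
          have hr' : ¬ (addE g i j).Reachable y z := fun hr =>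
            not_reachable_no_nbrs h1' (Ne.symm hyz) hr.symm
          rw [sigmaThr_not_reachable hr, sigmaThr_not_reachable hr']
          simp
    · -- y isolated
      have h1 : ∀ w, ¬ g.Adj y w := fun w => hniso hyA hyB
      have h1' : ∀ w, ¬ (addE g i j).Adj y w := by
        intro w hw
        rcases addE_adj.mp hw with h | ⟨-, ⟨rfl, -⟩ | ⟨rfl, -⟩⟩
        · exact h1 w h
        · exact hyA hi
        · exact hyA hj
      rw [sigmaThr_not_reachable (not_reachable_no_nbrs h1 hyz),
        sigmaThr_not_reachable (not_reachable_no_nbrs h1' hyz)]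
      simp

end Kab

section Kab2
set_option linter.unusedSectionVars false
variable {V : Type*} [Fintype V] [DecidableEq V] {A B : Finset V} {g : SimpleGraph V}

/-- If `j` is isolated in `g`, then adding the edge `ij` does not change `j`'s betweenness. -/
lemma btw_add_pendant {i j : V} (hj : ∀ w, ¬ g.Adj j w) (hij : i ≠ j) :
    _root_.btw (addE g i j) j = _root_.btw g j := by
  apply btw_eq_btw
  intro y z hyz hyj hzj
  have h1 : sigmaThr g y z j = 0 := by
    apply sigmaThr_unique_nbr (Ne.symm hyj) (Ne.symm hzj)
    intro u w hu _
    exact absurd hu (hj u)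
  have h2 : sigmaThr (addE g i j) y z j = 0 := by
    apply sigmaThr_unique_nbr (Ne.symm hyj) (Ne.symm hzj)
    intro u w hu hw
    have hji : ∀ v, (addE g i j).Adj j v → v = i := by
      intro v hv
      rcases addE_adj.mp hv with h | ⟨-, ⟨hji', -⟩ | ⟨-, rfl⟩⟩
      · exact absurd h (hj v)
      · exact absurd hji'.symm hij
      · rfl
    rw [hji u hu, hji w hw]
  rw [h1, h2]
  simp

lemma btw_del_lt (hAB : Disjoint A B)
    (hg : ∀ u v : V, g.Adj u v ↔ ((u ∈ A ∧ v ∈ B) ∨ (u ∈ B ∧ v ∈ A)))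
    (hA2 : 2 ≤ A.card) (hB2 : 2 ≤ B.card) {i j : V} (hi : i ∈ A) (hj : j ∈ B) :
    _root_.btw (delE g i j) i < _root_.btw g i := by
  have hmemA : ∀ {u}, u ∈ A → u ∉ B := fun hu => Finset.disjoint_left.mp hAB hu
  have hmemB : ∀ {u}, u ∈ B → u ∉ A := fun hu => Finset.disjoint_right.mp hAB hu
  have hgAB : ∀ {u v}, u ∈ A → v ∈ B → g.Adj u v := fun hu hv => (hg _ _).mpr (Or.inl ⟨hu, hv⟩)
  have hgBA : ∀ {u v}, u ∈ B → v ∈ A → g.Adj u v := fun hu hv => (hg _ _).mpr (Or.inr ⟨hu, hv⟩)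
  have hnAA : ∀ {u v}, u ∈ A → v ∈ A → ¬ g.Adj u v := by
    intro u v hu hv hadj
    rcases (hg _ _).mp hadj with ⟨h1, h2⟩ | ⟨h1, h2⟩
    · exact hmemA hv h2
    · exact hmemA hu h1
  have hnBB : ∀ {u v}, u ∈ B → v ∈ B → ¬ g.Adj u v := by
    intro u v hu hv hadj
    rcases (hg _ _).mp hadj with ⟨h1, h2⟩ | ⟨h1, h2⟩
    · exact hmemB hu h1
    · exact hmemB hv h2
  have hniso : ∀ {u v}, u ∉ A → u ∉ B → ¬ g.Adj u v := by
    intro u v h1 h2 hadj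
    rcases (hg _ _).mp hadj with ⟨h3, -⟩ | ⟨h3, -⟩
    · exact h1 h3
    · exact h2 h3
  have hdadj : ∀ v w : V, ¬(v = i ∧ w = j) → ¬(v = j ∧ w = i) →
      ((delE g i j).Adj v w ↔ g.Adj v w) := by
    intro v w h1 h2
    rw [delE_adj]
    constructor
    · exact fun h => h.1
    · intro h
      refine ⟨h, ?_⟩
      rintro (h3 | h3)
      · exact h1 h3
      · exact h2 h3
  have hdg : ∀ v w : V, g.Adj v w → ¬(v = i ∧ w = j) → ¬(v = j ∧ w = i) →
      (delE g i j).Adj v w := fun v w h h1 h2 => (hdadj v w h1 h2).mpr h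
  have hdel_le : ∀ {v w : V}, (delE g i j).Adj v w → g.Adj v w := fun h => (delE_adj.mp h).1
  have hij : i ≠ j := fun h => hmemA hi (h ▸ hj)
  obtain ⟨z₀, hz₀B, hz₀j⟩ := Finset.exists_mem_ne (by omega : 1 < B.card) j
  obtain ⟨i', hi'A, hi'i⟩ := Finset.exists_mem_ne (by omega : 1 < A.card) i
  obtain ⟨x₀, hx₀B⟩ : B.Nonempty := Finset.card_pos.mp (by omega)
  have hndelij : ¬ (delE g i j).Adj i j := by
    rw [delE_adj]
    rintro ⟨-, h⟩
    exact h (Or.inl ⟨rfl, rfl⟩)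
  have hndelji : ¬ (delE g i j).Adj j i := by
    rw [delE_adj]
    rintro ⟨-, h⟩
    exact h (Or.inr ⟨rfl, rfl⟩)
  -- the through-term for a pair (j, z) with z ∈ B \ {j} vanishes in the deleted graph
  have hterm_del : ∀ z : V, z ∈ B → z ≠ j → sigmaThr (delE g i j) j z i = 0 := by
    intro z hzB hzj
    have hzi : z ≠ i := fun h => hmemB hzB (h ▸ hi)
    have hna : ¬ (delE g i j).Adj j z := fun h => hnBB hj hzB (hdel_le h)
    have hd : (delE g i j).dist j z = 2 := by
      refine dist_eq_two (fun h => hzj h.symm) hna (x := i') ?_ ?_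
      · exact hdg j i' (hgBA hj hi'A) (fun h => hij h.1.symm) (fun h => hi'i h.2)
      · exact hdg i' z (hgAB hi'A hzB) (fun h => hi'i h.1) (fun h => hmemA hi'A (h.1 ▸ hj))
    rw [sigmaThr_dist2 hd hij (Ne.symm hzi)]
    exact if_neg (fun hc => hndelji hc.1)
  apply btw_lt_btw (y₀ := j) (z₀ := z₀)
  · -- pointwise inequality
    intro y z hyz hyi hzi
    by_cases hyA : y ∈ A
    · by_cases hzA : z ∈ A
      · -- both in A: through-terms vanish in both graphs
        have hna : ¬ g.Adj y z := hnAA hyA hzA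
        have hna' : ¬ (delE g i j).Adj y z := fun h => hna (hdel_le h)
        have hd : g.dist y z = 2 := dist_eq_two hyz hna (hgAB hyA hx₀B) (hgBA hx₀B hzA)
        have hd' : (delE g i j).dist y z = 2 := by
          refine dist_eq_two hyz hna' (x := x₀) ?_ ?_
          · exact hdg y x₀ (hgAB hyA hx₀B) (fun h => hyi h.1) (fun h => hmemA hyA (h.1 ▸ hj))
          · exact hdg x₀ z (hgBA hx₀B hzA) (fun h => hmemB hx₀B (h.1 ▸ hi)) (fun h => hzi h.2)
        rw [sigmaThr_dist2 hd (Ne.symm hyi) (Ne.symm hzi),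
          sigmaThr_dist2 hd' (Ne.symm hyi) (Ne.symm hzi),
          if_neg (fun hc : g.Adj y i ∧ _ => hnAA hyA hi hc.1),
          if_neg (fun hc : (delE g i j).Adj y i ∧ _ => hnAA hyA hi (hdel_le hc.1))]
        simp
      · by_cases hzB : z ∈ B
        · -- y ∈ A, z ∈ B: adjacent in both graphs
          have h1 : g.Adj y z := hgAB hyA hzB
          have h1' : (delE g i j).Adj y z :=
            hdg y z h1 (fun h => hyi h.1) (fun h => hmemA hyA (h.1 ▸ hj))
          rw [sigmaThr_adj h1 (Ne.symm hyi) (Ne.symm hzi),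
            sigmaThr_adj h1' (Ne.symm hyi) (Ne.symm hzi)]
          simp
        · -- z isolated
          have h1 : ∀ w, ¬ g.Adj z w := fun w => hniso hzA hzB
          have h1' : ∀ w, ¬ (delE g i j).Adj z w := fun w h => h1 w (hdel_le h)
          rw [sigmaThr_not_reachable (fun hr => not_reachable_no_nbrs h1 (Ne.symm hyz) hr.symm),
            sigmaThr_not_reachable (fun hr => not_reachable_no_nbrs h1' (Ne.symm hyz) hr.symm)]
          simp
    · by_cases hyB : y ∈ B
      · by_cases hzA : z ∈ A
        · -- y ∈ B, z ∈ A: adjacent in both graphs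
          have h1 : g.Adj y z := hgBA hyB hzA
          have h1' : (delE g i j).Adj y z :=
            hdg y z h1 (fun h => hmemB hyB (h.1 ▸ hi)) (fun h => hzi h.2)
          rw [sigmaThr_adj h1 (Ne.symm hyi) (Ne.symm hzi),
            sigmaThr_adj h1' (Ne.symm hyi) (Ne.symm hzi)]
          simp
        · by_cases hzB : z ∈ B
          · -- y, z ∈ B
            have hyi' : y ≠ i := fun h => hmemB hyB (h ▸ hi)
            have hzi' : z ≠ i := fun h => hmemB hzB (h ▸ hi)
            have hna : ¬ g.Adj y z := hnBB hyB hzB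
            have hna' : ¬ (delE g i j).Adj y z := fun h => hna (hdel_le h)
            by_cases hyj : y = j
            · -- y = j : deleted term vanishes, g term is nonnegative
              have hzj' : z ≠ j := fun h => hyz (hyj.trans h.symm)
              rw [hyj, hterm_del z hzB hzj']
              simp only [Nat.cast_zero, zero_div]
              positivity
            · by_cases hzj : z = j
              · -- z = j : deleted term vanishes
                have hd' : (delE g i j).dist y z = 2 := by
                  refine dist_eq_two hyz hna' (x := i') ?_ ?_
                  · exact hdg y i' (hgBA hyB hi'A) (fun h => hyi' h.1) (fun h => hi'i h.2)
                  · exact hdg i' z (hgAB hi'A hzB) (fun h => hi'i h.1)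
                      (fun h => hmemA hi'A (h.1 ▸ hj))
                rw [sigmaThr_dist2 hd' (Ne.symm hyi) (Ne.symm hzi),
                  if_neg (fun hc : _ ∧ (delE g i j).Adj i z => hndelij (hzj ▸ hc.2))]
                simp only [Nat.cast_zero, zero_div]
                positivity
              · -- neither is j: terms agree
                have hd : g.dist y z = 2 := dist_eq_two hyz hna (hgBA hyB hi) (hgAB hi hzB)
                have hd' : (delE g i j).dist y z = 2 := by
                  refine dist_eq_two hyz hna' (x := i) ?_ ?_
                  · exact hdg y i (hgBA hyB hi) (fun h => hyi' h.1) (fun h => hyj h.1)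
                  · exact hdg i z (hgAB hi hzB) (fun h => hzj h.2) (fun h => hij h.1)
                have hcard : Nat.card {x : V // (delE g i j).Adj y x ∧ (delE g i j).Adj x z} =
                    Nat.card {x : V // g.Adj y x ∧ g.Adj x z} := by
                  apply Nat.card_congr
                  apply Equiv.subtypeEquivRight
                  intro x
                  rw [hdadj y x (fun h => hyi' h.1) (fun h => hyj h.1),
                    hdadj x z (fun h => hzj h.2) (fun h => hzi' h.2)]
                rw [sigmaThr_dist2 hd (Ne.symm hyi) (Ne.symm hzi),
                  sigmaThr_dist2 hd' (Ne.symm hyi) (Ne.symm hzi),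
                  sigmaAll_dist2 hd, sigmaAll_dist2 hd', hcard,
                  if_pos ⟨hdg y i (hgBA hyB hi) (fun h => hyi' h.1) (fun h => hyj h.1),
                    hdg i z (hgAB hi hzB) (fun h => hzj h.2) (fun h => hij h.1)⟩,
                  if_pos ⟨hgBA hyB hi, hgAB hi hzB⟩]
          · -- z isolated
            have h1 : ∀ w, ¬ g.Adj z w := fun w => hniso hzA hzB
            have h1' : ∀ w, ¬ (delE g i j).Adj z w := fun w h => h1 w (hdel_le h)
            rw [sigmaThr_not_reachable (fun hr => not_reachable_no_nbrs h1 (Ne.symm hyz) hr.symm),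
              sigmaThr_not_reachable (fun hr => not_reachable_no_nbrs h1' (Ne.symm hyz) hr.symm)]
            simp
      · -- y isolated
        have h1 : ∀ w, ¬ g.Adj y w := fun w => hniso hyA hyB
        have h1' : ∀ w, ¬ (delE g i j).Adj y w := fun w h => h1 w (hdel_le h)
        rw [sigmaThr_not_reachable (not_reachable_no_nbrs h1 hyz),
          sigmaThr_not_reachable (not_reachable_no_nbrs h1' hyz)]
        simp
  · exact Ne.symm hz₀j
  · exact Ne.symm hij
  · exact fun h => hmemB hz₀B (h ▸ hi)
  · -- strict inequality at the pair (j, z₀)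
    have hz₀i : z₀ ≠ i := fun h => hmemB hz₀B (h ▸ hi)
    have hd : g.dist j z₀ = 2 :=
      dist_eq_two (Ne.symm hz₀j) (hnBB hj hz₀B) (hgBA hj hi) (hgAB hi hz₀B)
    have h1 : sigmaThr g j z₀ i = 1 := by
      rw [sigmaThr_dist2 hd hij (Ne.symm hz₀i)]
      exact if_pos ⟨hgBA hj hi, hgAB hi hz₀B⟩
    have hpos : 0 < sigmaAll g j z₀ := by
      rw [sigmaAll_dist2 hd]
      haveI : Nonempty {x : V // g.Adj j x ∧ g.Adj x z₀} := ⟨⟨i, hgBA hj hi, hgAB hi hz₀B⟩⟩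
      exact Nat.card_pos
    rw [hterm_del z₀ hz₀B hz₀j, h1]
    have hcast : (0:ℝ) < (sigmaAll g j z₀ : ℝ) := by exact_mod_cast hpos
    simpa using div_pos one_pos hcast

end Kab2

set_option maxHeartbeats 1600000 in
theorem statement_10 {V : Type*} [Fintype V] [DecidableEq V] (a b : ℕ)
    (ha : 2 ≤ a) (hb : 2 ≤ b) (A B : Finset V) (hA : A.card = a) (hB : B.card = b)
    (hAB : Disjoint A B) (g : SimpleGraph V)
    -- g is the complete bipartite graph on A ∪ B, all other vertices isolated
    (hg : ∀ u v : V, g.Adj u v ↔ ((u ∈ A ∧ v ∈ B) ∨ (u ∈ B ∧ v ∈ A))) :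
    APSN (fun v h => btw h v) g ∧
      -- in particular, the nontrivial component of g is not a complete graph
      ∃ u v : V, u ≠ v ∧ g.Reachable u v ∧ ¬ g.Adj u v := by
  classical
  have hmemA : ∀ {u}, u ∈ A → u ∉ B := fun hu => Finset.disjoint_left.mp hAB hu
  have hmemB : ∀ {u}, u ∈ B → u ∉ A := fun hu => Finset.disjoint_right.mp hAB hu
  have hA2 : 2 ≤ A.card := hA ▸ ha
  have hB2 : 2 ≤ B.card := hB ▸ hb
  have hg' : ∀ u v : V, g.Adj u v ↔ ((u ∈ B ∧ v ∈ A) ∨ (u ∈ A ∧ v ∈ B)) :=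
    fun u v => (hg u v).trans or_comm
  obtain ⟨u₀, hu₀, v₀, hv₀, huv₀⟩ := Finset.one_lt_card.mp (by omega : 1 < A.card)
  obtain ⟨w₀, hw₀B⟩ : B.Nonempty := Finset.card_pos.mp (by omega : 0 < B.card)
  have hAu₀ : ∀ u ∈ A, ∀ v ∈ B, g.Adj u v := fun u hu v hv => (hg _ _).mpr (Or.inl ⟨hu, hv⟩)
  constructor
  · -- APSN
    set S : Finset (V × V) := Finset.univ.filter (fun p => g.Adj p.1 p.2) with hS
    have hSmem : ∀ {p : V × V}, p ∈ S ↔ g.Adj p.1 p.2 := by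
      intro p; rw [hS, Finset.mem_filter]; simp
    have hSne : S.Nonempty := ⟨(u₀, w₀), hSmem.mpr (hAu₀ u₀ hu₀ w₀ hw₀B)⟩
    have hgap : ∀ p ∈ S, (0:ℝ) < _root_.btw g p.1 - _root_.btw (delE g p.1 p.2) p.1 := by
      intro p hp
      have hadj : g.Adj p.1 p.2 := hSmem.mp hp
      rcases (hg _ _).mp hadj with ⟨h1, h2⟩ | ⟨h1, h2⟩
      · have := btw_del_lt hAB hg hA2 hB2 h1 h2; linarith
      · have := btw_del_lt hAB.symm hg' hB2 hA2 h1 h2; linarith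
    set ε₀ : ℝ := S.inf' hSne (fun p => _root_.btw g p.1 - _root_.btw (delE g p.1 p.2) p.1) with hε
    have hε₀pos : 0 < ε₀ := by
      rw [hε, Finset.lt_inf'_iff]
      exact hgap
    refine ⟨ε₀, hε₀pos, ?_⟩
    intro c hc hcε
    constructor
    · -- no improving additions
      intro i j hne hnadj himp
      obtain ⟨h1, h2, -⟩ := himp
      have key : ∀ k l : V, k ≠ l → _root_.btw (addE g k l) k = _root_.btw g k → ¬ g.Adj k l →
          ¬ (util (fun v h => _root_.btw h v) c k (addE g k l) ≥ util (fun v h => _root_.btw h v) c k g) := by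
        intro k l hkl hb' hnadj' hge
        have hd := deg_addE hkl hnadj'
        simp only [util] at hge
        rw [hb', hd] at hge
        push_cast at hge
        linarith [hge, hc]
      by_cases hiA : i ∈ A
      · by_cases hjA : j ∈ A
        · exact key i j hne (btw_add_intra hAB hg ⟨w₀, hw₀B⟩ hiA hjA hne) hnadj h1
        · by_cases hjB : j ∈ B
          · exact hnadj ((hg _ _).mpr (Or.inl ⟨hiA, hjB⟩))
          · -- j isolated
            have hisoj : ∀ w, ¬ g.Adj j w := by
              intro w hw
              rcases (hg _ _).mp hw with ⟨h3, -⟩ | ⟨h3, -⟩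
              · exact hjA h3
              · exact hjB h3
            have hb' : _root_.btw (addE g j i) j = _root_.btw g j := by
              rw [← (addE_comm : addE g i j = addE g j i)]
              exact btw_add_pendant hisoj hne
            rw [(addE_comm : addE g i j = addE g j i)] at h2
            exact key j i hne.symm hb' (fun h => hnadj h.symm) h2
      · by_cases hiB : i ∈ B
        · by_cases hjB : j ∈ B
          · exact key i j hne (btw_add_intra hAB.symm hg' ⟨u₀, hu₀⟩ hiB hjB hne) hnadj h1
          · by_cases hjA : j ∈ A
            · exact hnadj ((hg _ _).mpr (Or.inr ⟨hiB, hjA⟩))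
            · have hisoj : ∀ w, ¬ g.Adj j w := by
                intro w hw
                rcases (hg _ _).mp hw with ⟨h3, -⟩ | ⟨h3, -⟩
                · exact hjA h3
                · exact hjB h3
              have hb' : _root_.btw (addE g j i) j = _root_.btw g j := by
                rw [← (addE_comm : addE g i j = addE g j i)]
                exact btw_add_pendant hisoj hne
              rw [(addE_comm : addE g i j = addE g j i)] at h2
              exact key j i hne.symm hb' (fun h => hnadj h.symm) h2
        · -- i isolated
          have hisoi : ∀ w, ¬ g.Adj i w := by
            intro w hw
            rcases (hg _ _).mp hw with ⟨h3, -⟩ | ⟨h3, -⟩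
            · exact hiA h3
            · exact hiB h3
          have hb' : _root_.btw (addE g i j) i = _root_.btw g i := by
            rw [(addE_comm : addE g i j = addE g j i)]
            exact btw_add_pendant hisoi hne.symm
          exact key i j hne hb' hnadj h1
    · -- no improving deletions
      intro i j hadj himp
      have hkey : ∀ k l : V, g.Adj k l →
          ¬ (util (fun v h => _root_.btw h v) c k (delE g k l) > util (fun v h => _root_.btw h v) c k g) := by
        intro k l hkl hgt
        have hd := deg_delE hkl
        have hgapAll : ∀ p ∈ S, ε₀ ≤
            _root_.btw g p.1 - _root_.btw (delE g p.1 p.2) p.1 := by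
          intro p hp
          rw [hε]
          exact Finset.inf'_le _ hp
        have hgap' := hgapAll (k, l) ((hSmem (p := (k, l))).mpr hkl)
        dsimp only at hgap'
        simp only [util] at hgt
        rw [hd.1] at hgt
        have hcast : ((deg g k - 1 : ℕ) : ℝ) = (deg g k : ℝ) - 1 := by
          exact_mod_cast Nat.cast_sub hd.2
        rw [hcast] at hgt
        linarith [hgt, hgap', hcε]
      rcases himp with hgt | hgt
      · exact hkey i j hadj hgt
      · rw [(delE_comm : delE g i j = delE g j i)] at hgt
        exact hkey j i hadj.symm hgt
  · -- the nontrivial component is not complete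
    refine ⟨u₀, v₀, huv₀, ?_, ?_⟩
    · exact (Walk.cons (hAu₀ u₀ hu₀ w₀ hw₀B)
        (Walk.cons ((hg _ _).mpr (Or.inr ⟨hw₀B, hv₀⟩)) Walk.nil)).reachable
    · intro h
      rcases (hg _ _).mp h with ⟨-, h2⟩ | ⟨h1, -⟩
      · exact hmemA hv₀ h2
      · exact hmemA hu₀ h1
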